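/- Let G be a connected graph with minimum degree δ(G) ≥ 4, at least 5 vertices, and orientable genus g. Then b_tr(G) ≤ h₁(g) + Δ(G) − 4, where h₁(x) = 2x + 13 for 0 ≤ x ≤ 3 and h₁(x) = 4x + 7 for x ≥ 3. If moreover G contains no 3-cycles, then b_tr(G) ≤ h₂(g) + Δ(G) − 4, where h₂(0) = 8 and h₂(x) = 4x + 5 for x ≥ 1. -/

import Mathlib

open SimpleGraph Finset

variable {V : Type*} [Fintype V] [DecidableEq V]

/-- The number of orbits (cycles together with fixed points) of a permutation of a finite type. -/
noncomputable def permNumOrbits {α : Type*} [Fintype α] [DecidableEq α] (ψ : Equiv.Perm α) : ℕ :=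
  Multiset.card ψ.cycleType + (Finset.univ.filter fun a => ψ a = a).card

/-- A combinatorial (2-cell) embedding scheme of a graph on a surface:
a rotation system together with an edge signature (Mohar–Thomassen). -/
structure SimpleGraph.EmbeddingScheme (G : SimpleGraph V) [DecidableRel G.Adj] where
  rot : Equiv.Perm G.Dart
  rot_fst : ∀ d : G.Dart, (rot d).toProd.1 = d.toProd.1
  rot_cyclic : ∀ d e : G.Dart, d.toProd.1 = e.toProd.1 → ∃ k : ℕ, (rot ^ k) d = e
  sign : G.Dart → ℤˣ
  sign_symm : ∀ d : G.Dart, sign d.symm = sign d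

namespace SimpleGraph.EmbeddingScheme

variable {G : SimpleGraph V} [DecidableRel G.Adj] (S : G.EmbeddingScheme)

def swapPerm : Equiv.Perm (G.Dart × ℤˣ) :=
  Function.Involutive.toPerm (fun p => (p.1.symm, p.2 * S.sign p.1)) (by
    intro p
    simp [SimpleGraph.Dart.symm_symm, S.sign_symm p.1, mul_assoc, Int.units_mul_self])

def rotPerm : Equiv.Perm (G.Dart × ℤˣ) where
  toFun p := ((S.rot ^ (p.2 : ℤ)) p.1, p.2)
  invFun p := ((S.rot ^ (-(p.2 : ℤ))) p.1, p.2)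
  left_inv p := by
    simp [← Equiv.Perm.mul_apply, ← zpow_add]
  right_inv p := by
    show ((S.rot ^ (p.2 : ℤ)) ((S.rot ^ (-(p.2 : ℤ))) p.1), p.2) = p
    rw [← Equiv.Perm.mul_apply, ← zpow_add, add_neg_cancel, zpow_zero, Equiv.Perm.one_apply]

/-- The face-tracing permutation on signed darts. -/
def faceMap : Equiv.Perm (G.Dart × ℤˣ) := S.swapPerm.trans S.rotPerm

/-- Each face is traced by exactly two orbits of the face-tracing permutation. -/
noncomputable def numFaces : ℕ := permNumOrbits S.faceMap / 2

/-- The Euler characteristic of the closed surface determined by the scheme. -/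
noncomputable def eulerChar : ℤ :=
  (Fintype.card V : ℤ) - (G.edgeFinset.card : ℤ) + (S.numFaces : ℤ)

/-- The scheme describes an embedding on an orientable surface iff its signature
is switching-equivalent to the all-positive signature. -/
def IsOrientable : Prop := ∃ θ : V → ℤˣ, ∀ d : G.Dart, S.sign d = θ d.toProd.1 * θ d.toProd.2

end SimpleGraph.EmbeddingScheme

/-- `G` has orientable genus `g`. -/
def SimpleGraph.HasOrientableGenus (G : SimpleGraph V) [DecidableRel G.Adj] (g : ℕ) : Prop :=
  (∃ S : G.EmbeddingScheme, S.IsOrientable ∧ S.eulerChar = 2 - 2 * (g : ℤ)) ∧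
  ∀ g' : ℕ, g' < g → ¬ ∃ S : G.EmbeddingScheme, S.IsOrientable ∧ S.eulerChar = 2 - 2 * (g' : ℤ)

/-- `G` has nonorientable genus `k`. -/
def SimpleGraph.HasNonorientableGenus (G : SimpleGraph V) [DecidableRel G.Adj] (k : ℕ) : Prop :=
  (∃ S : G.EmbeddingScheme, ¬ S.IsOrientable ∧ S.eulerChar = 2 - (k : ℤ)) ∧
  ∀ k' : ℕ, k' < k → ¬ ∃ S : G.EmbeddingScheme, ¬ S.IsOrientable ∧ S.eulerChar = 2 - (k' : ℤ)

/-- `G` is planar: every component embeds in the sphere. -/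
def SimpleGraph.IsPlanar (G : SimpleGraph V) [DecidableRel G.Adj] : Prop :=
  ∃ S : G.EmbeddingScheme, S.IsOrientable ∧
    S.eulerChar = 2 * (Nat.card G.ConnectedComponent : ℤ)

/-- `S` is a total dominating set: every vertex has a neighbour in `S`. -/
def SimpleGraph.IsTotalDominatingSet (G : SimpleGraph V) (S : Finset V) : Prop :=
  ∀ v : V, ∃ u ∈ S, G.Adj u v

noncomputable def SimpleGraph.totalDominationNumber (G : SimpleGraph V) : ℕ :=
  sInf {k : ℕ | ∃ S : Finset V, G.IsTotalDominatingSet S ∧ S.card = k}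

/-- The spanning subgraph of `G` keeping only edges meeting `S`. -/
def SimpleGraph.weakSubgraph (G : SimpleGraph V) (S : Finset V) : SimpleGraph V where
  Adj u v := G.Adj u v ∧ (u ∈ S ∨ v ∈ S)
  symm := ⟨fun u v h => ⟨h.1.symm, h.2.symm⟩⟩
  loopless := ⟨fun v h => G.loopless.1 v h.1⟩

/-- `S` is a weakly connected dominating set. -/
def SimpleGraph.IsWeaklyConnectedDominatingSet (G : SimpleGraph V) (S : Finset V) : Prop :=
  S.Nonempty ∧ (G.weakSubgraph S).Connected

noncomputable def SimpleGraph.weaklyConnectedDominationNumber (G : SimpleGraph V) : ℕ :=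
  sInf {k : ℕ | ∃ S : Finset V, G.IsWeaklyConnectedDominatingSet S ∧ S.card = k}

/-- `S` is a connected dominating set. -/
def SimpleGraph.IsConnectedDominatingSet (G : SimpleGraph V) (S : Finset V) : Prop :=
  (∀ v ∉ S, ∃ u ∈ S, G.Adj u v) ∧ (G.induce (S : Set V)).Connected

noncomputable def SimpleGraph.connectedDominationNumber (G : SimpleGraph V) : ℕ :=
  sInf {k : ℕ | ∃ S : Finset V, G.IsConnectedDominatingSet S ∧ S.card = k}

/-- `S` is a restrained dominating set. -/
def SimpleGraph.IsRestrainedDominatingSet (G : SimpleGraph V) (S : Finset V) : Prop :=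
  ∀ v ∉ S, (∃ u ∈ S, G.Adj u v) ∧ (∃ w ∉ S, G.Adj w v)

noncomputable def SimpleGraph.restrainedDominationNumber (G : SimpleGraph V) : ℕ :=
  sInf {k : ℕ | ∃ S : Finset V, G.IsRestrainedDominatingSet S ∧ S.card = k}

/-- The restrained bondage number. -/
noncomputable def SimpleGraph.restrainedBondageNumber (G : SimpleGraph V) : ℕ :=
  sInf {k : ℕ | ∃ F : Finset (Sym2 V), ↑F ⊆ G.edgeSet ∧ F.card = k ∧
    G.restrainedDominationNumber < (G.deleteEdges ↑F).restrainedDominationNumber}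

/-- `S` is a total restrained dominating set. -/
def SimpleGraph.IsTotalRestrainedDominatingSet (G : SimpleGraph V) (S : Finset V) : Prop :=
  (∀ v : V, ∃ u ∈ S, G.Adj u v) ∧ ∀ v ∉ S, ∃ w ∉ S, G.Adj w v

noncomputable def SimpleGraph.totalRestrainedDominationNumber (G : SimpleGraph V) : ℕ :=
  sInf {k : ℕ | ∃ S : Finset V, G.IsTotalRestrainedDominatingSet S ∧ S.card = k}

/-- The total restrained bondage number (`⊤` if no suitable edge set exists). -/
noncomputable def SimpleGraph.totalRestrainedBondageNumber (G : SimpleGraph V) : ℕ∞ :=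
  sInf {k : ℕ∞ | ∃ F : Finset (Sym2 V), ↑F ⊆ G.edgeSet ∧ (F.card : ℕ∞) = k ∧
    (∀ v : V, ∃ u : V, (G.deleteEdges ↑F).Adj u v) ∧
    G.totalRestrainedDominationNumber < (G.deleteEdges ↑F).totalRestrainedDominationNumber}

/-- Roman dominating function. -/
def SimpleGraph.IsRomanDominatingFunction (G : SimpleGraph V) (f : V → ℕ) : Prop :=
  (∀ v : V, f v ≤ 2) ∧ ∀ v : V, f v = 0 → ∃ u : V, G.Adj u v ∧ f u = 2

noncomputable def SimpleGraph.romanDominationNumber (G : SimpleGraph V) : ℕ :=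
  sInf {k : ℕ | ∃ f : V → ℕ, G.IsRomanDominatingFunction f ∧ ∑ v : V, f v = k}

noncomputable def SimpleGraph.romanBondageNumber (G : SimpleGraph V) : ℕ :=
  sInf {k : ℕ | ∃ F : Finset (Sym2 V), ↑F ⊆ G.edgeSet ∧ F.card = k ∧
    G.romanDominationNumber < (G.deleteEdges ↑F).romanDominationNumber}

/-- The minimum edge-degree `ξ(G)`. -/
noncomputable def SimpleGraph.minEdgeDegree (G : SimpleGraph V) [DecidableRel G.Adj] : ℕ :=
  sInf {k : ℕ | ∃ d : G.Dart, G.degree d.toProd.1 + G.degree d.toProd.2 - 2 = k}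

/-- A restricted edge-cut: removing it disconnects `G` leaving no isolated vertex. -/
def SimpleGraph.IsRestrictedEdgeCut (G : SimpleGraph V) (F : Finset (Sym2 V)) : Prop :=
  ↑F ⊆ G.edgeSet ∧ ¬ (G.deleteEdges ↑F).Connected ∧
    ∀ v : V, ∃ u : V, (G.deleteEdges ↑F).Adj u v

/-- The restricted edge-connectivity `λ'(G)`. -/
noncomputable def SimpleGraph.restrictedEdgeConnectivity (G : SimpleGraph V) : ℕ :=
  sInf {k : ℕ | ∃ F : Finset (Sym2 V), G.IsRestrictedEdgeCut F ∧ F.card = k}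

/-- `G` is a star: all edges share a common vertex. -/
def SimpleGraph.IsStar (G : SimpleGraph V) : Prop :=
  ∃ c : V, ∀ e ∈ G.edgeSet, c ∈ e

/-- The average degree `2|E|/|V|` of `G`. -/
noncomputable def SimpleGraph.averageDegree (G : SimpleGraph V) [DecidableRel G.Adj] : ℝ :=
  2 * (G.edgeFinset.card : ℝ) / (Fintype.card V : ℝ)

def h1 (x : ℕ) : ℕ := if x ≤ 3 then 2 * x + 13 else 4 * x + 7
def h2 (x : ℕ) : ℕ := if x = 0 then 8 else 4 * x + 5
def k1 (x : ℕ) : ℕ := if x ≤ 2 then 2 * x + 11 else if x ≤ 5 then 2 * x + 9 else 2 * x + 7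
def k2 (x : ℕ) : ℕ := if x = 1 then 8 else 2 * x + 5


section EulerDev
variable {V : Type*} [Fintype V] [DecidableEq V] {G : SimpleGraph V} [DecidableRel G.Adj]

namespace SimpleGraph.EmbeddingScheme

lemma rot_zpow_fst (E : G.EmbeddingScheme) (z : ℤˣ) (d : G.Dart) :
    ((E.rot ^ (z : ℤ)) d).toProd.1 = d.toProd.1 := by
  rcases Int.units_eq_one_or z with h | h <;> rw [h]
  · simpa using E.rot_fst d
  · show ((E.rot ^ (-1 : ℤ)) d).toProd.1 = d.toProd.1
    rw [zpow_neg_one]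
    conv_rhs => rw [show d = E.rot (E.rot⁻¹ d) by simp]
    exact (E.rot_fst _).symm

lemma faceMap_apply (E : G.EmbeddingScheme) (p : G.Dart × ℤˣ) :
    E.faceMap p = ((E.rot ^ ((p.2 * E.sign p.1 : ℤˣ) : ℤ)) p.1.symm, p.2 * E.sign p.1) := rfl

lemma faceMap_fst (E : G.EmbeddingScheme) (p : G.Dart × ℤˣ) :
    (E.faceMap p).1.toProd.1 = p.1.toProd.2 := by
  rw [faceMap_apply, rot_zpow_fst]
  rfl

lemma faceMap_ne (E : G.EmbeddingScheme) (p : G.Dart × ℤˣ) : E.faceMap p ≠ p := by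
  intro h
  have h2 : p.1.toProd.2 = p.1.toProd.1 := by
    conv_lhs => rw [← faceMap_fst E p, h]
  exact (G.ne_of_adj p.1.adj) h2.symm

end SimpleGraph.EmbeddingScheme
end EulerDev

section EulerDev2
set_option linter.unusedSectionVars false
variable {V : Type*} [Fintype V] [DecidableEq V] {G : SimpleGraph V} [DecidableRel G.Adj]

namespace SimpleGraph.EmbeddingScheme

lemma rot_fix_absurd (E : G.EmbeddingScheme) (hδ2 : ∀ v, 2 ≤ G.degree v)
    (x : G.Dart) (hx : E.rot x = x) : False := by
  have hall : ∀ e : G.Dart, x.toProd.1 = e.toProd.1 → e = x := by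
    intro e he
    obtain ⟨k, hk⟩ := E.rot_cyclic x e he
    have hfix : ∀ n : ℕ, (E.rot ^ n) x = x := by
      intro n
      induction n with
      | zero => rfl
      | succ n ih => rw [pow_succ, Equiv.Perm.mul_apply, hx, ih]
    rw [hfix k] at hk
    exact hk.symm
  have h2 := hδ2 x.toProd.1
  rw [← SimpleGraph.card_neighborFinset_eq_degree] at h2
  obtain ⟨w₁, hw₁, w₂, hw₂, hne⟩ := Finset.one_lt_card.1
    (show 1 < (G.neighborFinset x.toProd.1).card by omega)
  rw [SimpleGraph.mem_neighborFinset] at hw₁ hw₂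
  have e₁ : G.Dart := ⟨(x.toProd.1, w₁), hw₁⟩
  have h₁ := hall ⟨(x.toProd.1, w₁), hw₁⟩ rfl
  have h₂ := hall ⟨(x.toProd.1, w₂), hw₂⟩ rfl
  apply hne
  have := h₁.trans h₂.symm
  have := congrArg (fun d : G.Dart => d.toProd.2) this
  simpa using this

lemma no_two_cycle (E : G.EmbeddingScheme) (hδ2 : ∀ v, 2 ≤ G.degree v)
    (p : G.Dart × ℤˣ) (h2 : E.faceMap (E.faceMap p) = p) : False := by
  set q := E.faceMap p with hq
  have hqfst : q.1.toProd.1 = p.1.toProd.2 := faceMap_fst E p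
  have h2' : E.faceMap q = p := by rw [hq]; exact h2
  have hpfst : p.1.toProd.1 = q.1.toProd.2 := by
    have h := faceMap_fst E q
    rw [h2'] at h
    exact h
  have hq1 : q.1 = p.1.symm := by
    apply SimpleGraph.Dart.ext
    exact Prod.ext hqfst hpfst.symm
  have happ : q.1 = (E.rot ^ ((p.2 * E.sign p.1 : ℤˣ) : ℤ)) p.1.symm := by
    rw [hq, faceMap_apply]
  rw [hq1] at happ
  set s : ℤˣ := p.2 * E.sign p.1
  have hfix : E.rot p.1.symm = p.1.symm := by
    rcases Int.units_eq_one_or s with h | h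
    · rw [h] at happ; simpa using happ.symm
    · rw [h] at happ
      have : (E.rot ^ (-1 : ℤ)) p.1.symm = p.1.symm := by exact_mod_cast happ.symm
      rw [zpow_neg_one] at this
      conv_lhs => rw [← this]
      simp
  exact rot_fix_absurd E hδ2 _ hfix

lemma no_three_cycle (E : G.EmbeddingScheme) (hfree : G.CliqueFree 3)
    (p : G.Dart × ℤˣ) (h3 : E.faceMap (E.faceMap (E.faceMap p)) = p) : False := by
  set p1 := E.faceMap p with hp1
  set p2 := E.faceMap p1 with hp2
  have e01 : p1.1.toProd.1 = p.1.toProd.2 := faceMap_fst E p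
  have e12 : p2.1.toProd.1 = p1.1.toProd.2 := faceMap_fst E p1
  have h3' : E.faceMap p2 = p := by rw [hp2, hp1]; exact h3
  have e20 : p.1.toProd.1 = p2.1.toProd.2 := by
    have h := faceMap_fst E p2
    rw [h3'] at h
    exact h
  apply hfree {p.1.toProd.1, p.1.toProd.2, p1.1.toProd.2}
  rw [SimpleGraph.is3Clique_triple_iff]
  refine ⟨p.1.adj, ?_, ?_⟩
  · have := p2.1.adj
    rw [e12, ← e20] at this
    exact this.symm
  · have := p1.1.adj
    rw [e01] at this
    exact this

end SimpleGraph.EmbeddingScheme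
end EulerDev2

section EulerDev3
set_option linter.unusedSectionVars false
variable {V : Type*} [Fintype V] [DecidableEq V] {G : SimpleGraph V} [DecidableRel G.Adj]

theorem cycle_extract {α : Type*} [Fintype α] [DecidableEq α] (σ : Equiv.Perm α) {k : ℕ}
    (hk : k ∈ σ.cycleType) : ∃ x, σ x ≠ x ∧ (σ ^ k) x = x := by
  rw [Equiv.Perm.cycleType_def, Multiset.mem_map] at hk
  obtain ⟨c, hc, hcard⟩ := hk
  have hc' : c ∈ σ.cycleFactorsFinset := hc
  obtain ⟨hcyc, hagree⟩ := (Equiv.Perm.mem_cycleFactorsFinset_iff).1 hc'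
  have hord : orderOf c = k := by rw [hcyc.orderOf]; exact hcard
  have hsupp : c.support.Nonempty := by
    rw [Finset.nonempty_iff_ne_empty]
    intro h
    exact hcyc.ne_one (by rwa [← Equiv.Perm.support_eq_empty_iff])
  obtain ⟨x, hx⟩ := hsupp
  have hpow : ∀ n : ℕ, (σ ^ n) x = (c ^ n) x := by
    intro n
    induction n with
    | zero => simp
    | succ n ih =>
      rw [pow_succ', pow_succ', Equiv.Perm.mul_apply, Equiv.Perm.mul_apply, ih]
      exact (hagree _ ((Equiv.Perm.pow_apply_mem_support).2 hx)).symm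
  refine ⟨x, ?_, ?_⟩
  · rw [← hagree x hx]; exact Equiv.Perm.mem_support.1 hx
  · rw [hpow k, ← hord, pow_orderOf_eq_one c]; rfl

namespace SimpleGraph.EmbeddingScheme

lemma cycleType_three_le (E : G.EmbeddingScheme) (hδ2 : ∀ v, 2 ≤ G.degree v) :
    ∀ k ∈ E.faceMap.cycleType, 3 ≤ k := by
  intro k hk
  have h2le : 2 ≤ k := Equiv.Perm.two_le_of_mem_cycleType hk
  rcases eq_or_lt_of_le h2le with h | h
  · exfalso
    obtain ⟨x, hne, hfix⟩ := cycle_extract _ hk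
    rw [← h] at hfix
    apply no_two_cycle E hδ2 x
    rw [show E.faceMap (E.faceMap x) = (E.faceMap ^ 2) x by
      rw [pow_two, Equiv.Perm.mul_apply]]
    exact hfix
  · exact h

lemma cycleType_four_le (E : G.EmbeddingScheme) (hδ2 : ∀ v, 2 ≤ G.degree v)
    (hfree : G.CliqueFree 3) : ∀ k ∈ E.faceMap.cycleType, 4 ≤ k := by
  intro k hk
  have h3le : 3 ≤ k := cycleType_three_le E hδ2 k hk
  rcases eq_or_lt_of_le h3le with h | h
  · exfalso
    obtain ⟨x, hne, hfix⟩ := cycle_extract _ hk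
    rw [← h] at hfix
    apply no_three_cycle E hfree x
    rw [show E.faceMap (E.faceMap (E.faceMap x)) = (E.faceMap ^ 3) x by
      rw [pow_succ, pow_two, Equiv.Perm.mul_apply, Equiv.Perm.mul_apply]]
    exact hfix
  · exact h

lemma permNumOrbits_eq (E : G.EmbeddingScheme) :
    permNumOrbits E.faceMap = Multiset.card E.faceMap.cycleType := by
  unfold permNumOrbits
  have h : (Finset.univ.filter fun a => E.faceMap a = a) = ∅ := by
    ext p
    simp only [Finset.mem_filter, Finset.mem_univ, true_and, Finset.notMem_empty, iff_false]
    exact faceMap_ne E p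
  rw [h]
  simp

lemma cycleType_sum_eq (E : G.EmbeddingScheme) :
    E.faceMap.cycleType.sum = 4 * G.edgeFinset.card := by
  rw [Equiv.Perm.sum_cycleType]
  have hsupp : E.faceMap.support = Finset.univ := by
    ext p
    simp only [Equiv.Perm.mem_support, Finset.mem_univ, iff_true]
    exact faceMap_ne E p
  rw [hsupp, Finset.card_univ, Fintype.card_prod, SimpleGraph.dart_card_eq_twice_card_edges]
  have h2 : Fintype.card ℤˣ = 2 := by decide
  rw [h2]
  ring

lemma numFaces_le (E : G.EmbeddingScheme) (hδ2 : ∀ v, 2 ≤ G.degree v) :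
    3 * E.numFaces ≤ 2 * G.edgeFinset.card := by
  have h1 : Multiset.card E.faceMap.cycleType • 3 ≤ E.faceMap.cycleType.sum :=
    Multiset.card_nsmul_le_sum (cycleType_three_le E hδ2)
  rw [cycleType_sum_eq, smul_eq_mul] at h1
  have h2 : 2 * E.numFaces ≤ permNumOrbits E.faceMap := by
    unfold numFaces; omega
  rw [permNumOrbits_eq] at h2
  omega

lemma numFaces_le_tf (E : G.EmbeddingScheme) (hδ2 : ∀ v, 2 ≤ G.degree v)
    (hfree : G.CliqueFree 3) : 2 * E.numFaces ≤ G.edgeFinset.card := by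
  have h1 : Multiset.card E.faceMap.cycleType • 4 ≤ E.faceMap.cycleType.sum :=
    Multiset.card_nsmul_le_sum (cycleType_four_le E hδ2 hfree)
  rw [cycleType_sum_eq, smul_eq_mul] at h1
  have h2 : 2 * E.numFaces ≤ permNumOrbits E.faceMap := by
    unfold numFaces; omega
  rw [permNumOrbits_eq] at h2
  omega

lemma edge_bound (E : G.EmbeddingScheme) (hδ2 : ∀ v, 2 ≤ G.degree v) (g : ℕ)
    (hχ : E.eulerChar = 2 - 2 * (g : ℤ)) :
    2 * G.edgeFinset.card + 12 ≤ 6 * Fintype.card V + 12 * g := by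
  have h3 := numFaces_le E hδ2
  unfold SimpleGraph.EmbeddingScheme.eulerChar at hχ
  have h3' : (3 : ℤ) * E.numFaces ≤ 2 * G.edgeFinset.card := by exact_mod_cast h3
  have goal' : (2 : ℤ) * G.edgeFinset.card + 12 ≤ 6 * Fintype.card V + 12 * g := by linarith
  exact_mod_cast goal'

lemma edge_bound_tf (E : G.EmbeddingScheme) (hδ2 : ∀ v, 2 ≤ G.degree v)
    (hfree : G.CliqueFree 3) (g : ℕ) (hχ : E.eulerChar = 2 - 2 * (g : ℤ)) :
    2 * G.edgeFinset.card + 8 ≤ 4 * Fintype.card V + 8 * g := by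
  have h4 := numFaces_le_tf E hδ2 hfree
  unfold SimpleGraph.EmbeddingScheme.eulerChar at hχ
  have h4' : (2 : ℤ) * E.numFaces ≤ G.edgeFinset.card := by exact_mod_cast h4
  have goal' : (2 : ℤ) * G.edgeFinset.card + 8 ≤ 4 * Fintype.card V + 8 * g := by linarith
  exact_mod_cast goal'

end SimpleGraph.EmbeddingScheme
end EulerDev3

section LightPath
set_option linter.unusedSectionVars false
variable {V : Type*} [Fintype V] [DecidableEq V] (G : SimpleGraph V) [DecidableRel G.Adj]

lemma exists_path_any (hδ : 4 ≤ G.minDegree) (hV : 1 ≤ Fintype.card V) :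
    ∃ a b c : V, G.Adj a b ∧ G.Adj b c ∧ a ≠ c := by
  have hne : Nonempty V := Fintype.card_pos_iff.1 (by omega)
  obtain ⟨b⟩ := hne
  have h := hδ.trans (G.minDegree_le_degree b)
  rw [← SimpleGraph.card_neighborFinset_eq_degree] at h
  obtain ⟨a, ha, c, hc, hne⟩ := Finset.one_lt_card.1
    (show 1 < (G.neighborFinset b).card by omega)
  rw [SimpleGraph.mem_neighborFinset] at ha hc
  exact ⟨a, b, c, ha.symm, hc, hne⟩

lemma light_count (t : ℕ) (hδ : 4 ≤ G.minDegree)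
    (hcon : ∀ a b c : V, G.Adj a b → G.Adj b c → a ≠ c →
      2 * t + 1 ≤ G.degree a + G.degree c) :
    ∃ L Lc SL : ℕ, L + Lc = Fintype.card V ∧ 4 * L ≤ SL ∧ SL ≤ Fintype.card V ∧
      SL + (t + 1) * Lc ≤ 2 * G.edgeFinset.card := by
  classical
  set Λ : Finset V := Finset.univ.filter (fun v => G.degree v ≤ t) with hΛdef
  set Λc : Finset V := Finset.univ.filter (fun v => ¬ G.degree v ≤ t) with hΛcdef
  refine ⟨Λ.card, Λc.card, ∑ v ∈ Λ, G.degree v, ?_, ?_, ?_, ?_⟩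
  · rw [hΛdef, hΛcdef, Finset.card_filter_add_card_filter_not, Finset.card_univ]
  · rw [show 4 * Λ.card = Λ.card • 4 by rw [smul_eq_mul]; ring]
    apply Finset.card_nsmul_le_sum
    intro v _
    have : Nonempty V := ⟨v⟩
    exact hδ.trans (G.minDegree_le_degree v)
  · -- each vertex has at most one Λ-neighbour
    have hΛ1 : ∀ y : V, (Λ.filter (fun z => G.Adj y z)).card ≤ 1 := by
      intro y
      by_contra hc
      obtain ⟨x, hx, z, hz, hne⟩ := Finset.one_lt_card.1
        (show 1 < (Λ.filter (fun z => G.Adj y z)).card by omega)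
      rw [Finset.mem_filter, hΛdef, Finset.mem_filter] at hx hz
      have hdx := hx.1.2
      have hdz := hz.1.2
      have := hcon x y z hx.2.symm hz.2 hne
      omega
    have key : ∑ v ∈ Λ, G.degree v = ∑ y : V, (Λ.filter (fun v => G.Adj y v)).card := by
      have h1 : ∀ v : V, G.degree v = ∑ y : V, if G.Adj v y then 1 else 0 := by
        intro v
        rw [← SimpleGraph.card_neighborFinset_eq_degree, SimpleGraph.neighborFinset_eq_filter,
          Finset.card_filter]
      calc ∑ v ∈ Λ, G.degree v = ∑ v ∈ Λ, ∑ y : V, if G.Adj v y then 1 else 0 :=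
            Finset.sum_congr rfl (fun v _ => h1 v)
        _ = ∑ y : V, ∑ v ∈ Λ, if G.Adj v y then 1 else 0 := Finset.sum_comm
        _ = ∑ y : V, (Λ.filter (fun v => G.Adj y v)).card := by
            apply Finset.sum_congr rfl
            intro y _
            rw [Finset.card_filter]
            apply Finset.sum_congr rfl
            intro v _
            congr 1
            simp [SimpleGraph.adj_comm]
    calc ∑ v ∈ Λ, G.degree v = ∑ y : V, (Λ.filter (fun v => G.Adj y v)).card := key
      _ ≤ ∑ _y : V, 1 := Finset.sum_le_sum (fun y _ => hΛ1 y)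
      _ = Fintype.card V := by simp
  · have hsplit : ∑ v ∈ Λ, G.degree v + ∑ v ∈ Λc, G.degree v = ∑ v : V, G.degree v := by
      rw [hΛdef, hΛcdef]
      exact Finset.sum_filter_add_sum_filter_not _ _ _
    have hc : Λc.card • (t + 1) ≤ ∑ v ∈ Λc, G.degree v := by
      apply Finset.card_nsmul_le_sum
      intro v hv
      rw [hΛcdef, Finset.mem_filter] at hv
      omega
    rw [smul_eq_mul] at hc
    have := G.sum_degrees_eq_twice_card_edges
    have h2 : (t+1) * Λc.card = Λc.card * (t+1) := by ring
    omega

end LightPath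

section LightPathWrap
set_option linter.unusedSectionVars false
variable {V : Type*} [Fintype V] [DecidableEq V] (G : SimpleGraph V) [DecidableRel G.Adj]

lemma exists_light_path_h1 (hδ : 4 ≤ G.minDegree) (hV : 5 ≤ Fintype.card V) (g : ℕ)
    (he : 2 * G.edgeFinset.card + 12 ≤ 6 * Fintype.card V + 12 * g) :
    ∃ a b c : V, G.Adj a b ∧ G.Adj b c ∧ a ≠ c ∧ G.degree a + G.degree c ≤ h1 g := by
  have hh1 : h1 g = if g ≤ 3 then 2 * g + 13 else 4 * g + 7 := rfl
  by_cases htriv : 2 * (Fintype.card V - 1) ≤ h1 g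
  · obtain ⟨a, b, c, hab, hbc, hac⟩ := exists_path_any G hδ (by omega)
    refine ⟨a, b, c, hab, hbc, hac, ?_⟩
    have h1a := G.degree_lt_card_verts a
    have h1c := G.degree_lt_card_verts c
    omega
  · by_contra hcon
    push_neg at hcon
    set t : ℕ := if g ≤ 3 then g + 6 else 2 * g + 3 with ht
    have h2t : 2 * t ≤ h1 g := by rw [hh1, ht]; split <;> omega
    have hcon' : ∀ a b c : V, G.Adj a b → G.Adj b c → a ≠ c →
        2 * t + 1 ≤ G.degree a + G.degree c := by
      intro a b c hab hbc hac
      have := hcon a b c hab hbc hac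
      omega
    obtain ⟨L, Lc, SL, hsum, h4L, hSLn, hrest⟩ := light_count G t hδ hcon'
    by_cases hg3 : g ≤ 3
    · have ht' : t = g + 6 := by rw [ht, if_pos hg3]
      rw [hh1, if_pos hg3] at htriv
      rw [ht'] at hrest
      interval_cases g <;> omega
    · have ht' : t = 2 * g + 3 := by rw [ht, if_neg hg3]
      rw [hh1, if_neg hg3] at htriv
      -- n ≥ 2g+5, g ≥ 4
      have hn : 2 * g + 5 ≤ Fintype.card V := by omega
      have hg4 : 4 ≤ g := by omega
      rw [ht'] at hrest
      -- cast to ℤ and conclude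
      have hZ1 : (4 : ℤ) * L ≤ (Fintype.card V : ℤ) := by exact_mod_cast h4L.trans hSLn
      have hZ2 : (SL : ℤ) + (2 * g + 4) * Lc ≤ 2 * G.edgeFinset.card := by exact_mod_cast hrest
      have hZ3 : (2 : ℤ) * G.edgeFinset.card + 12 ≤ 6 * Fintype.card V + 12 * g := by
        exact_mod_cast he
      have hZ4 : (L : ℤ) + Lc = Fintype.card V := by exact_mod_cast hsum
      have hZ5 : (4 : ℤ) * L ≤ SL := by exact_mod_cast h4L
      have hZ6 : (2 * (g : ℤ) + 5) ≤ Fintype.card V := by exact_mod_cast hn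
      have hZ7 : (4 : ℤ) ≤ g := by exact_mod_cast hg4
      nlinarith [mul_le_mul_of_nonneg_left hZ1 (show (0:ℤ) ≤ 2 * g by linarith),
        mul_le_mul_of_nonneg_left hZ6 (show (0:ℤ) ≤ 6 * g - 8 by linarith)]

lemma exists_light_path_h2 (hδ : 4 ≤ G.minDegree) (hV : 5 ≤ Fintype.card V) (g : ℕ)
    (he : 2 * G.edgeFinset.card + 8 ≤ 4 * Fintype.card V + 8 * g) :
    ∃ a b c : V, G.Adj a b ∧ G.Adj b c ∧ a ≠ c ∧ G.degree a + G.degree c ≤ h2 g := by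
  have hh2 : h2 g = if g = 0 then 8 else 4 * g + 5 := rfl
  have hne : Nonempty V := Fintype.card_pos_iff.1 (by omega)
  -- degree sum lower bound
  have hdegsum : 4 * Fintype.card V ≤ 2 * G.edgeFinset.card := by
    rw [← G.sum_degrees_eq_twice_card_edges]
    have : (Finset.univ : Finset V).card • 4 ≤ ∑ v : V, G.degree v := by
      apply Finset.card_nsmul_le_sum
      intro v _
      exact hδ.trans (G.minDegree_le_degree v)
    rw [Finset.card_univ, smul_eq_mul] at this
    omega
  rcases Nat.eq_zero_or_pos g with hg0 | hgpos
  · exfalso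
    rw [hg0] at he
    omega
  by_cases htriv : 2 * (Fintype.card V - 1) ≤ h2 g
  · obtain ⟨a, b, c, hab, hbc, hac⟩ := exists_path_any G hδ (by omega)
    refine ⟨a, b, c, hab, hbc, hac, ?_⟩
    have h1a := G.degree_lt_card_verts a
    have h1c := G.degree_lt_card_verts c
    omega
  · by_contra hcon
    push_neg at hcon
    set t : ℕ := 2 * g + 2 with ht
    have h2t : 2 * t ≤ h2 g := by rw [hh2, if_neg (by omega)]; omega
    have hcon' : ∀ a b c : V, G.Adj a b → G.Adj b c → a ≠ c →
        2 * t + 1 ≤ G.degree a + G.degree c := by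
      intro a b c hab hbc hac
      have := hcon a b c hab hbc hac
      omega
    obtain ⟨L, Lc, SL, hsum, h4L, hSLn, hrest⟩ := light_count G t hδ hcon'
    rw [hh2, if_neg (by omega)] at htriv
    have hn : 2 * g + 4 ≤ Fintype.card V := by omega
    rw [ht] at hrest
    have hZ1 : (4 : ℤ) * L ≤ (Fintype.card V : ℤ) := by exact_mod_cast h4L.trans hSLn
    have hZ2 : (SL : ℤ) + (2 * g + 3) * Lc ≤ 2 * G.edgeFinset.card := by exact_mod_cast hrest
    have hZ3 : (2 : ℤ) * G.edgeFinset.card + 8 ≤ 4 * Fintype.card V + 8 * g := by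
      exact_mod_cast he
    have hZ4 : (L : ℤ) + Lc = Fintype.card V := by exact_mod_cast hsum
    have hZ5 : (4 : ℤ) * L ≤ SL := by exact_mod_cast h4L
    have hZ6 : (2 * (g : ℤ) + 4) ≤ Fintype.card V := by exact_mod_cast hn
    have hZ7 : (1 : ℤ) ≤ g := by exact_mod_cast hgpos
    nlinarith [mul_le_mul_of_nonneg_left hZ1 (show (0:ℤ) ≤ 2 * g - 1 by linarith),
      mul_le_mul_of_nonneg_left hZ6 (show (0:ℤ) ≤ 6 * g - 3 by linarith)]

end LightPathWrap

section Bondage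
set_option linter.unusedSectionVars false
variable {V : Type*} [Fintype V] [DecidableEq V] (G : SimpleGraph V) [DecidableRel G.Adj]

lemma trds_univ (H : SimpleGraph V) (hiso : ∀ v, ∃ u, H.Adj u v) :
    H.IsTotalRestrainedDominatingSet Finset.univ := by
  constructor
  · intro v; obtain ⟨u, hu⟩ := hiso v; exact ⟨u, Finset.mem_univ u, hu⟩
  · intro v hv; exact absurd (Finset.mem_univ v) hv

lemma trds_number_spec (H : SimpleGraph V) (hiso : ∀ v, ∃ u, H.Adj u v) :
    ∃ S : Finset V, H.IsTotalRestrainedDominatingSet S ∧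
      S.card = H.totalRestrainedDominationNumber := by
  have hne : {k : ℕ | ∃ S : Finset V, H.IsTotalRestrainedDominatingSet S ∧ S.card = k}.Nonempty :=
    ⟨Finset.univ.card, Finset.univ, trds_univ H hiso, rfl⟩
  obtain ⟨S, hS, hcard⟩ := Nat.sInf_mem hne
  exact ⟨S, hS, hcard⟩

lemma trds_number_le (H : SimpleGraph V) (S : Finset V)
    (hS : H.IsTotalRestrainedDominatingSet S) :
    H.totalRestrainedDominationNumber ≤ S.card :=
  Nat.sInf_le ⟨S, hS, rfl⟩

lemma bondage_step (hδ : 4 ≤ G.minDegree) (a b c : V) (hab : G.Adj a b) (hbc : G.Adj b c)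
    (hac : a ≠ c) :
    ∃ F : Finset (Sym2 V), ↑F ⊆ G.edgeSet ∧
      F.card + 4 ≤ G.degree a + G.degree b + G.degree c ∧
      (∀ v, ∃ u, (G.deleteEdges ↑F).Adj u v) ∧
      G.totalRestrainedDominationNumber < (G.deleteEdges ↑F).totalRestrainedDominationNumber := by
  classical
  have hnV : Nonempty V := ⟨a⟩
  have hdeg : ∀ v : V, 4 ≤ G.degree v := fun v => hδ.trans (G.minDegree_le_degree v)
  have hba : b ≠ a := hab.ne'
  have hcb : c ≠ b := hbc.ne'
  set F : Finset (Sym2 V) := G.edgeFinset.filter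
    (fun e => (a ∈ e ∨ b ∈ e ∨ c ∈ e) ∧ e ≠ s(a,b) ∧ e ≠ s(b,c)) with hF
  set G' := G.deleteEdges (F : Set (Sym2 V)) with hG'
  have hFsub : (F : Set (Sym2 V)) ⊆ G.edgeSet := by
    intro e he
    rw [Finset.mem_coe, hF, Finset.mem_filter] at he
    exact (SimpleGraph.mem_edgeFinset).1 he.1
  have hK6 : ∀ {x y : V}, G'.Adj x y → G.Adj x y := by
    intro x y h; rw [hG', SimpleGraph.deleteEdges_adj] at h; exact h.1
  -- neighbourhood restrictions
  have hKa : ∀ {u : V}, G'.Adj u a → u = b := by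
    intro u h
    rw [hG', SimpleGraph.deleteEdges_adj] at h
    obtain ⟨hadj, hnin⟩ := h
    by_contra hub
    apply hnin
    rw [Finset.mem_coe, hF, Finset.mem_filter]
    refine ⟨SimpleGraph.mem_edgeFinset.2 (G.mem_edgeSet.2 hadj), Or.inl ?_, ?_, ?_⟩
    · rw [Sym2.mem_iff]; right; rfl
    · intro heq
      rcases Sym2.eq_iff.1 heq with ⟨h1, h2⟩ | ⟨h1, h2⟩
      · exact hab.ne h2
      · exact hub h1
    · intro heq
      rcases Sym2.eq_iff.1 heq with ⟨h1, h2⟩ | ⟨h1, h2⟩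
      · exact hac h2
      · exact hab.ne h2
  have hKc : ∀ {u : V}, G'.Adj u c → u = b := by
    intro u h
    rw [hG', SimpleGraph.deleteEdges_adj] at h
    obtain ⟨hadj, hnin⟩ := h
    by_contra hub
    apply hnin
    rw [Finset.mem_coe, hF, Finset.mem_filter]
    refine ⟨SimpleGraph.mem_edgeFinset.2 (G.mem_edgeSet.2 hadj), Or.inr (Or.inr ?_), ?_, ?_⟩
    · rw [Sym2.mem_iff]; right; rfl
    · intro heq
      rcases Sym2.eq_iff.1 heq with ⟨h1, h2⟩ | ⟨h1, h2⟩
      · exact hcb h2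
      · exact hac h2.symm
    · intro heq
      rcases Sym2.eq_iff.1 heq with ⟨h1, h2⟩ | ⟨h1, h2⟩
      · exact hub h1
      · exact hcb h2
  have hKb : ∀ {u : V}, G'.Adj u b → u = a ∨ u = c := by
    intro u h
    rw [hG', SimpleGraph.deleteEdges_adj] at h
    obtain ⟨hadj, hnin⟩ := h
    by_contra hu
    push_neg at hu
    apply hnin
    rw [Finset.mem_coe, hF, Finset.mem_filter]
    refine ⟨SimpleGraph.mem_edgeFinset.2 (G.mem_edgeSet.2 hadj), Or.inr (Or.inl ?_), ?_, ?_⟩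
    · rw [Sym2.mem_iff]; right; rfl
    · intro heq
      rcases Sym2.eq_iff.1 heq with ⟨h1, h2⟩ | ⟨h1, h2⟩
      · exact hu.1 h1
      · exact hba h2
    · intro heq
      rcases Sym2.eq_iff.1 heq with ⟨h1, h2⟩ | ⟨h1, h2⟩
      · exact hbc.ne h2
      · exact hu.2 h1
  have hsurv : ∀ {x y : V}, G.Adj x y → x ≠ a → x ≠ b → x ≠ c → y ≠ a → y ≠ b → y ≠ c →
      G'.Adj x y := by
    intro x y hxy hxa hxb hxc hya hyb hyc
    rw [hG', SimpleGraph.deleteEdges_adj]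
    refine ⟨hxy, ?_⟩
    intro hmem
    rw [Finset.mem_coe, hF, Finset.mem_filter] at hmem
    rcases hmem.2.1 with h | h | h <;> rw [Sym2.mem_iff] at h <;>
      rcases h with h | h
    · exact hxa h.symm
    · exact hya h.symm
    · exact hxb h.symm
    · exact hyb h.symm
    · exact hxc h.symm
    · exact hyc h.symm
  have hG'ab : G'.Adj a b := by
    rw [hG', SimpleGraph.deleteEdges_adj]
    refine ⟨hab, ?_⟩
    intro hmem
    rw [Finset.mem_coe, hF, Finset.mem_filter] at hmem
    exact hmem.2.2.1 rfl
  have hG'bc : G'.Adj b c := by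
    rw [hG', SimpleGraph.deleteEdges_adj]
    refine ⟨hbc, ?_⟩
    intro hmem
    rw [Finset.mem_coe, hF, Finset.mem_filter] at hmem
    exact hmem.2.2.2 rfl
  -- no isolated vertices
  have hnbr3 : ∀ (v w₁ w₂ w₃ : V), ∃ p, G.Adj v p ∧ p ≠ w₁ ∧ p ≠ w₂ ∧ p ≠ w₃ := by
    intro v w₁ w₂ w₃
    have h4 := hdeg v
    rw [← SimpleGraph.card_neighborFinset_eq_degree] at h4
    have hsd := Finset.le_card_sdiff ({w₁, w₂, w₃} : Finset V) (G.neighborFinset v)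
    have hpair : ({w₁, w₂, w₃} : Finset V).card ≤ 3 :=
      (Finset.card_insert_le _ _).trans (by
        have := Finset.card_insert_le w₂ ({w₃} : Finset V)
        simp at this ⊢
        omega)
    obtain ⟨p, hp⟩ := Finset.card_pos.1
      (show 0 < ((G.neighborFinset v) \ {w₁, w₂, w₃}).card by omega)
    rw [Finset.mem_sdiff, SimpleGraph.mem_neighborFinset] at hp
    have hp2 := hp.2
    simp only [Finset.mem_insert, Finset.mem_singleton] at hp2
    push_neg at hp2
    exact ⟨p, hp.1, hp2.1, hp2.2.1, hp2.2.2⟩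
  have hiso : ∀ v, ∃ u, G'.Adj u v := by
    intro v
    by_cases hva : v = a
    · exact ⟨b, hva ▸ hG'ab.symm⟩
    by_cases hvb : v = b
    · exact ⟨a, hvb ▸ hG'ab⟩
    by_cases hvc : v = c
    · exact ⟨b, hvc ▸ hG'bc⟩
    obtain ⟨p, hp, hp1, hp2, hp3⟩ := hnbr3 v a b c
    exact ⟨p, hsurv hp.symm hp1 hp2 hp3 hva hvb hvc⟩
  -- cardinality bound
  have habne : s(a,b) ≠ s(b,c) := by
    intro heq
    rcases Sym2.eq_iff.1 heq with ⟨h1, h2⟩ | ⟨h1, h2⟩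
    · exact hab.ne h1
    · exact hac h1
  have hcard : F.card + 4 ≤ G.degree a + G.degree b + G.degree c := by
    have habI : s(a,b) ∈ G.incidenceFinset b := by
      rw [SimpleGraph.mem_incidenceFinset]
      exact ⟨G.mem_edgeSet.2 hab, Sym2.mem_iff.2 (Or.inr rfl)⟩
    have hbcI : s(b,c) ∈ G.incidenceFinset b := by
      rw [SimpleGraph.mem_incidenceFinset]
      exact ⟨G.mem_edgeSet.2 hbc, Sym2.mem_iff.2 (Or.inl rfl)⟩
    have hsub : F ∪ {s(a,b), s(b,c)} ⊆
        G.incidenceFinset a ∪ (G.incidenceFinset b \ {s(a,b), s(b,c)}) ∪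
          G.incidenceFinset c := by
      intro e he
      rw [Finset.mem_union] at he
      rcases he with he | he
      · rw [hF, Finset.mem_filter] at he
        obtain ⟨heE, htouch, hne1, hne2⟩ := he
        have heS : e ∈ G.edgeSet := (SimpleGraph.mem_edgeFinset).1 heE
        rw [Finset.mem_union, Finset.mem_union]
        rcases htouch with h | h | h
        · exact Or.inl (Or.inl (by rw [SimpleGraph.mem_incidenceFinset]; exact ⟨heS, h⟩))
        · refine Or.inl (Or.inr ?_)
          rw [Finset.mem_sdiff]
          refine ⟨by rw [SimpleGraph.mem_incidenceFinset]; exact ⟨heS, h⟩, ?_⟩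
          simp only [Finset.mem_insert, Finset.mem_singleton]
          push_neg
          exact ⟨hne1, hne2⟩
        · exact Or.inr (by rw [SimpleGraph.mem_incidenceFinset]; exact ⟨heS, h⟩)
      · simp only [Finset.mem_insert, Finset.mem_singleton] at he
        rw [Finset.mem_union, Finset.mem_union]
        rcases he with rfl | rfl
        · exact Or.inl (Or.inl (by
            rw [SimpleGraph.mem_incidenceFinset]
            exact ⟨G.mem_edgeSet.2 hab, Sym2.mem_iff.2 (Or.inl rfl)⟩))
        · exact Or.inr (by
            rw [SimpleGraph.mem_incidenceFinset]
            exact ⟨G.mem_edgeSet.2 hbc, Sym2.mem_iff.2 (Or.inr rfl)⟩)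
    have hdisj : Disjoint F ({s(a,b), s(b,c)} : Finset (Sym2 V)) := by
      rw [Finset.disjoint_right]
      intro e he heF
      simp only [Finset.mem_insert, Finset.mem_singleton] at he
      rw [hF, Finset.mem_filter] at heF
      rcases he with rfl | rfl
      · exact heF.2.2.1 rfl
      · exact heF.2.2.2 rfl
    have h1 := Finset.card_le_card hsub
    rw [Finset.card_union_of_disjoint hdisj] at h1
    have hpairc : ({s(a,b), s(b,c)} : Finset (Sym2 V)).card = 2 := by
      rw [Finset.card_insert_of_notMem (by simp [habne]), Finset.card_singleton]
    have hpairsub : ({s(a,b), s(b,c)} : Finset (Sym2 V)) ⊆ G.incidenceFinset b := by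
      intro e he
      simp only [Finset.mem_insert, Finset.mem_singleton] at he
      rcases he with rfl | rfl
      · exact habI
      · exact hbcI
    have h2 : (G.incidenceFinset a ∪ (G.incidenceFinset b \ {s(a,b), s(b,c)}) ∪
        G.incidenceFinset c).card ≤
        (G.incidenceFinset a).card + (G.incidenceFinset b \ {s(a,b), s(b,c)}).card +
          (G.incidenceFinset c).card := by
      calc _ ≤ (G.incidenceFinset a ∪ (G.incidenceFinset b \ {s(a,b), s(b,c)})).card +
            (G.incidenceFinset c).card := Finset.card_union_le _ _
        _ ≤ _ := by
            have := Finset.card_union_le (G.incidenceFinset a)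
              (G.incidenceFinset b \ {s(a,b), s(b,c)})
            omega
    have h3 : (G.incidenceFinset b \ {s(a,b), s(b,c)}).card =
        (G.incidenceFinset b).card - 2 := by
      rw [Finset.card_sdiff_of_subset hpairsub, hpairc]
    have hda := G.card_incidenceFinset_eq_degree a
    have hdb := G.card_incidenceFinset_eq_degree b
    have hdc := G.card_incidenceFinset_eq_degree c
    have hdb4 := hdeg b
    omega
  refine ⟨F, hFsub, hcard, hiso, ?_⟩
  -- γ_tr strictly increases
  by_contra hnot
  push_neg at hnot
  rw [← hG'] at hnot
  obtain ⟨S, hS, hScard⟩ := trds_number_spec G' hiso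
  have hγle : G.totalRestrainedDominationNumber ≤ S.card := trds_number_le G S (by
    constructor
    · intro v
      obtain ⟨u, hu, hadj⟩ := hS.1 v
      exact ⟨u, hu, hK6 hadj⟩
    · intro v hv
      obtain ⟨w, hw, hadj⟩ := hS.2 v hv
      exact ⟨w, hw, hK6 hadj⟩)
  -- so all the numbers are equal
  have hγeq : S.card = G.totalRestrainedDominationNumber := by omega
  -- forced membership of a, b, c in S
  have hbS : b ∈ S := by
    obtain ⟨u, hu, hadj⟩ := hS.1 a
    rwa [hKa hadj] at hu
  have haS : a ∈ S := by
    by_contra ha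
    obtain ⟨w, hw, hadj⟩ := hS.2 a ha
    rw [hKa hadj] at hw
    exact hw hbS
  have hcS : c ∈ S := by
    by_contra hc
    obtain ⟨w, hw, hadj⟩ := hS.2 c hc
    rw [hKc hadj] at hw
    exact hw hbS
  have hP : ∀ x : V, x ≠ a → x ≠ b → x ≠ c →
      ∃ y, y ∈ S ∧ y ≠ a ∧ y ≠ b ∧ y ≠ c ∧ G.Adj y x := by
    intro x hxa hxb hxc
    obtain ⟨y, hy, hadj⟩ := hS.1 x
    have hya : y ≠ a := by rintro rfl; exact hxb (hKa hadj.symm)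
    have hyb : y ≠ b := by
      rintro rfl
      rcases hKb hadj.symm with h | h
      · exact hxa h
      · exact hxc h
    have hyc : y ≠ c := by rintro rfl; exact hxb (hKc hadj.symm)
    exact ⟨y, hy, hya, hyb, hyc, hK6 hadj⟩
  have hQ : ∀ x : V, x ∉ S → ∃ o, o ∉ S ∧ G.Adj o x := by
    intro x hx
    obtain ⟨o, ho, hadj⟩ := hS.2 x hx
    exact ⟨o, ho, hK6 hadj⟩
  have hcard3 : 3 ≤ S.card := by
    have hsub3 : ({a, b, c} : Finset V) ⊆ S := by
      intro x hx
      simp only [Finset.mem_insert, Finset.mem_singleton] at hx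
      rcases hx with rfl | rfl | rfl
      · exact haS
      · exact hbS
      · exact hcS
    have h3 : ({a, b, c} : Finset V).card = 3 := by
      rw [Finset.card_insert_of_notMem (by simp [hab.ne, hac]),
        Finset.card_insert_of_notMem (by simp [hbc.ne]), Finset.card_singleton]
    have := Finset.card_le_card hsub3
    omega
  by_cases hA : ∀ p, G.Adj a p → p ∈ S
  · by_cases hC : ∀ p, G.Adj c p → p ∈ S
    · by_cases hZ : ∀ p, G.Adj b p → p ∈ S
      · -- Case 1 : remove a, b, c
        set T := ((S.erase a).erase b).erase c with hT
        have hTmem : ∀ x, x ∈ T ↔ x ∈ S ∧ x ≠ a ∧ x ≠ b ∧ x ≠ c := by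
          intro x
          rw [hT]
          simp only [Finset.mem_erase]
          tauto
        have hTsub : T ⊆ S := fun x hx => ((hTmem x).1 hx).1
        have haT : a ∉ T := fun h => ((hTmem a).1 h).2.1 rfl
        have hbT : b ∉ T := fun h => ((hTmem b).1 h).2.2.1 rfl
        have hcT : c ∉ T := fun h => ((hTmem c).1 h).2.2.2 rfl
        have hTRDS : G.IsTotalRestrainedDominatingSet T := by
          constructor
          · intro v
            by_cases hva : v = a
            · obtain ⟨p, hp, hpb, hpc, _⟩ := hnbr3 a b c c
              have hpa : p ≠ a := fun h => G.ne_of_adj hp h.symm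
              exact ⟨p, (hTmem p).2 ⟨hA p hp, hpa, hpb, hpc⟩, hva ▸ hp.symm⟩
            by_cases hvb : v = b
            · obtain ⟨z, hz, hza, hzc, _⟩ := hnbr3 b a c c
              have hzb : z ≠ b := fun h => G.ne_of_adj hz h.symm
              exact ⟨z, (hTmem z).2 ⟨hZ z hz, hza, hzb, hzc⟩, hvb ▸ hz.symm⟩
            by_cases hvc : v = c
            · obtain ⟨q, hq, hqa, hqb, _⟩ := hnbr3 c a b b
              have hqc : q ≠ c := fun h => G.ne_of_adj hq h.symm
              exact ⟨q, (hTmem q).2 ⟨hC q hq, hqa, hqb, hqc⟩, hvc ▸ hq.symm⟩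
            obtain ⟨y, hy, hya, hyb, hyc, hadj⟩ := hP v hva hvb hvc
            exact ⟨y, (hTmem y).2 ⟨hy, hya, hyb, hyc⟩, hadj⟩
          · intro v hv
            by_cases hva : v = a
            · exact ⟨b, hbT, hva ▸ hab.symm⟩
            by_cases hvb : v = b
            · exact ⟨a, haT, hvb ▸ hab⟩
            by_cases hvc : v = c
            · exact ⟨b, hbT, hvc ▸ hbc⟩
            have hvS : v ∉ S := fun hvS => hv ((hTmem v).2 ⟨hvS, hva, hvb, hvc⟩)
            obtain ⟨o, ho, hadj⟩ := hQ v hvS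
            exact ⟨o, fun hoT => ho (hTsub hoT), hadj⟩
        have hTcard : T.card + 3 = S.card := by
          rw [hT, Finset.card_erase_of_mem (by
              rw [Finset.mem_erase, Finset.mem_erase]
              exact ⟨hcb, hac.symm, hcS⟩),
            Finset.card_erase_of_mem (by rw [Finset.mem_erase]; exact ⟨hba, hbS⟩),
            Finset.card_erase_of_mem haS]
          omega
        have := trds_number_le G T hTRDS
        omega
      · -- Case 4 : remove b
        push_neg at hZ
        obtain ⟨ζ, hbζ, hζS⟩ := hZ
        set T := S.erase b with hT
        have hTRDS : G.IsTotalRestrainedDominatingSet T := by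
          constructor
          · intro v
            by_cases hva : v = a
            · obtain ⟨p, hp, hpb, _, _⟩ := hnbr3 a b b b
              exact ⟨p, Finset.mem_erase.2 ⟨hpb, hA p hp⟩, hva ▸ hp.symm⟩
            by_cases hvb : v = b
            · exact ⟨a, Finset.mem_erase.2 ⟨hab.ne, haS⟩, hvb ▸ hab⟩
            by_cases hvc : v = c
            · obtain ⟨q, hq, hqb, _, _⟩ := hnbr3 c b b b
              exact ⟨q, Finset.mem_erase.2 ⟨hqb, hC q hq⟩, hvc ▸ hq.symm⟩
            obtain ⟨y, hy, _, hyb, _, hadj⟩ := hP v hva hvb hvc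
            exact ⟨y, Finset.mem_erase.2 ⟨hyb, hy⟩, hadj⟩
          · intro v hv
            by_cases hvb : v = b
            · refine ⟨ζ, fun hζT => hζS (Finset.mem_erase.1 hζT).2, hvb ▸ hbζ.symm⟩
            have hvS : v ∉ S := fun hvS => hv (Finset.mem_erase.2 ⟨hvb, hvS⟩)
            obtain ⟨o, ho, hadj⟩ := hQ v hvS
            exact ⟨o, fun hoT => ho (Finset.mem_erase.1 hoT).2, hadj⟩
        have hTcard : T.card + 1 = S.card := by
          rw [hT, Finset.card_erase_of_mem hbS]
          omega
        have := trds_number_le G T hTRDS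
        omega
    · -- Case 3 : remove c
      push_neg at hC
      obtain ⟨q, hcq, hqS⟩ := hC
      set T := S.erase c with hT
      have hTRDS : G.IsTotalRestrainedDominatingSet T := by
        constructor
        · intro v
          by_cases hva : v = a
          · exact ⟨b, Finset.mem_erase.2 ⟨hbc.ne, hbS⟩, hva ▸ hab.symm⟩
          by_cases hvb : v = b
          · exact ⟨a, Finset.mem_erase.2 ⟨hac, haS⟩, hvb ▸ hab⟩
          by_cases hvc : v = c
          · exact ⟨b, Finset.mem_erase.2 ⟨hbc.ne, hbS⟩, hvc ▸ hbc⟩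
          obtain ⟨y, hy, _, _, hyc, hadj⟩ := hP v hva hvb hvc
          exact ⟨y, Finset.mem_erase.2 ⟨hyc, hy⟩, hadj⟩
        · intro v hv
          by_cases hvc : v = c
          · exact ⟨q, fun hqT => hqS (Finset.mem_erase.1 hqT).2, hvc ▸ hcq.symm⟩
          have hvS : v ∉ S := fun hvS => hv (Finset.mem_erase.2 ⟨hvc, hvS⟩)
          obtain ⟨o, ho, hadj⟩ := hQ v hvS
          exact ⟨o, fun hoT => ho (Finset.mem_erase.1 hoT).2, hadj⟩
      have hTcard : T.card + 1 = S.card := by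
        rw [hT, Finset.card_erase_of_mem hcS]
        omega
      have := trds_number_le G T hTRDS
      omega
  · -- Case 2 : remove a
    push_neg at hA
    obtain ⟨p, hap, hpS⟩ := hA
    set T := S.erase a with hT
    have hTRDS : G.IsTotalRestrainedDominatingSet T := by
      constructor
      · intro v
        by_cases hva : v = a
        · exact ⟨b, Finset.mem_erase.2 ⟨hba, hbS⟩, hva ▸ hab.symm⟩
        by_cases hvb : v = b
        · exact ⟨c, Finset.mem_erase.2 ⟨fun h => hac h.symm, hcS⟩, hvb ▸ hbc.symm⟩
        by_cases hvc : v = c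
        · exact ⟨b, Finset.mem_erase.2 ⟨hba, hbS⟩, hvc ▸ hbc⟩
        obtain ⟨y, hy, hya, _, _, hadj⟩ := hP v hva hvb hvc
        exact ⟨y, Finset.mem_erase.2 ⟨hya, hy⟩, hadj⟩
      · intro v hv
        by_cases hva : v = a
        · exact ⟨p, fun hpT => hpS (Finset.mem_erase.1 hpT).2, hva ▸ hap.symm⟩
        have hvS : v ∉ S := fun hvS => hv (Finset.mem_erase.2 ⟨hva, hvS⟩)
        obtain ⟨o, ho, hadj⟩ := hQ v hvS
        exact ⟨o, fun hoT => ho (Finset.mem_erase.1 hoT).2, hadj⟩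
    have hTcard : T.card + 1 = S.card := by
      rw [hT, Finset.card_erase_of_mem haS]
      omega
    have := trds_number_le G T hTRDS
    omega

end Bondage

/-- bound on the total restrained bondage number via orientable genus. -/
theorem statement_11 {V : Type*} [Fintype V] [DecidableEq V] (G : SimpleGraph V)
    [DecidableRel G.Adj] (hconn : G.Connected) (hδ : 4 ≤ G.minDegree)
    (hcard : 5 ≤ Fintype.card V) (g : ℕ) (hg : G.HasOrientableGenus g) :
    G.totalRestrainedBondageNumber ≤ ((h1 g + G.maxDegree - 4 : ℕ) : ℕ∞) ∧
      (G.CliqueFree 3 →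
        G.totalRestrainedBondageNumber ≤ ((h2 g + G.maxDegree - 4 : ℕ) : ℕ∞)) := by
  obtain ⟨⟨E, _, hχ⟩, _⟩ := hg
  have hnV : Nonempty V := Fintype.card_pos_iff.1 (by omega)
  have hδ2 : ∀ v, 2 ≤ G.degree v := fun v =>
    le_trans (by omega) (hδ.trans (G.minDegree_le_degree v))
  have key : ∀ W : ℕ, 8 ≤ W →
      (∃ a b c : V, G.Adj a b ∧ G.Adj b c ∧ a ≠ c ∧ G.degree a + G.degree c ≤ W) →
      G.totalRestrainedBondageNumber ≤ ((W + G.maxDegree - 4 : ℕ) : ℕ∞) := by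
    rintro W hW ⟨a, b, c, hab, hbc, hac, hlt⟩
    obtain ⟨F, hFsub, hFcard, hFiso, hFlt⟩ := bondage_step G hδ a b c hab hbc hac
    have hmem : ((F.card : ℕ∞)) ∈ {k : ℕ∞ | ∃ F' : Finset (Sym2 V), ↑F' ⊆ G.edgeSet ∧
        (F'.card : ℕ∞) = k ∧ (∀ v : V, ∃ u : V, (G.deleteEdges ↑F').Adj u v) ∧
        G.totalRestrainedDominationNumber <
          (G.deleteEdges ↑F').totalRestrainedDominationNumber} :=
      ⟨F, hFsub, rfl, hFiso, hFlt⟩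
    have h1' : G.totalRestrainedBondageNumber ≤ (F.card : ℕ∞) := sInf_le hmem
    have hΔ : G.degree b ≤ G.maxDegree := G.degree_le_maxDegree b
    have h2' : F.card ≤ W + G.maxDegree - 4 := by omega
    exact h1'.trans (Nat.cast_le.2 h2')
  constructor
  · have he := SimpleGraph.EmbeddingScheme.edge_bound E hδ2 g hχ
    have hpath := exists_light_path_h1 G hδ hcard g he
    have h13 : 13 ≤ h1 g := by unfold h1; split <;> omega
    exact key (h1 g) (by omega) hpath
  · intro hfree
    have he := SimpleGraph.EmbeddingScheme.edge_bound_tf E hδ2 hfree g hχ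
    have hpath := exists_light_path_h2 G hδ hcard g he
    have h8 : 8 ≤ h2 g := by unfold h2; split <;> omega
    exact key (h2 g) h8 hpath
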